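/- Let μ be a good full non-atomic Borel measure on a locally compact Cantor set X and ν the counting measure on the finite discrete space {1,...,n}. Then the product measure μ × ν on X × {1,...,n} is good. -/

import Mathlib

open MeasureTheory Topology ENNReal TopologicalSpace

/-- A set is compact open. -/
def IsCompactOpen {X : Type*} [TopologicalSpace X] (U : Set X) : Prop :=
  IsCompact U ∧ IsOpen U

/-- The defective set of a measure: points all of whose compact open
neighbourhoods have infinite measure. -/
def DefectiveSet {X : Type*} [TopologicalSpace X] [MeasurableSpace X]
    (μ : Measure X) : Set X :=
  {x | ∀ U : Set X, IsCompactOpen U → x ∈ U → μ U = ⊤}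

/-- A compact open set `V` is good for `μ`. -/
def GoodSet {X : Type*} [TopologicalSpace X] [MeasurableSpace X]
    (μ : Measure X) (V : Set X) : Prop :=
  ∀ U : Set X, IsCompactOpen U → μ U < μ V →
    ∃ W : Set X, W ⊆ V ∧ IsCompactOpen W ∧ μ W = μ U

/-- The measure `μ` is good: every compact open set is good for `μ`. -/
def Good {X : Type*} [TopologicalSpace X] [MeasurableSpace X]
    (μ : Measure X) : Prop :=
  ∀ V : Set X, IsCompactOpen V → GoodSet μ V

/-- The restriction of `μ` to the (open) subset `A` is good: compact open
subsets of the subspace `A` are exactly compact open subsets of `X` contained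
in `A`. -/
def GoodOn {X : Type*} [TopologicalSpace X] [MeasurableSpace X]
    (μ : Measure X) (A : Set X) : Prop :=
  ∀ U V : Set X, IsCompactOpen U → U ⊆ A → IsCompactOpen V → V ⊆ A → μ U < μ V →
    ∃ W : Set X, W ⊆ V ∧ IsCompactOpen W ∧ μ W = μ U

/-- The compact open values set, as a set of extended nonnegative reals. -/
def SE {X : Type*} [TopologicalSpace X] [MeasurableSpace X]
    (μ : Measure X) : Set ℝ≥0∞ :=
  {v | v ≠ ⊤ ∧ ∃ U : Set X, IsCompactOpen U ∧ μ U = v}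

/-- The compact open values set of the restriction of `μ` to `A`. -/
def SEOn {X : Type*} [TopologicalSpace X] [MeasurableSpace X]
    (μ : Measure X) (A : Set X) : Set ℝ≥0∞ :=
  {v | v ≠ ⊤ ∧ ∃ U : Set X, IsCompactOpen U ∧ U ⊆ A ∧ μ U = v}

/-- The compact open values set, as a set of reals. -/
def Sreal {X : Type*} [TopologicalSpace X] [MeasurableSpace X]
    (μ : Measure X) : Set ℝ :=
  {r | ∃ U : Set X, IsCompactOpen U ∧ μ U ≠ ⊤ ∧ (μ U).toReal = r}

/-- The compact open values set of the restriction of `μ` to `A`, as reals. -/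
def SrealOn {X : Type*} [TopologicalSpace X] [MeasurableSpace X]
    (μ : Measure X) (A : Set X) : Set ℝ :=
  {r | ∃ U : Set X, IsCompactOpen U ∧ U ⊆ A ∧ μ U ≠ ⊤ ∧ (μ U).toReal = r}

/-- A measure is full if every non-empty open set has positive measure. -/
def IsFull {X : Type*} [TopologicalSpace X] [MeasurableSpace X]
    (μ : Measure X) : Prop :=
  ∀ U : Set X, IsOpen U → U.Nonempty → 0 < μ U

/-- A measure is non-atomic if every singleton has measure zero. -/
def NonAtomic {X : Type*} [MeasurableSpace X] (μ : Measure X) : Prop :=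
  ∀ x : X, μ {x} = 0

/-- The space has a countable basis consisting of compact open sets. -/
def HasCompactOpenBasis (X : Type*) [TopologicalSpace X] : Prop :=
  ∃ B : Set (Set X), B.Countable ∧ TopologicalSpace.IsTopologicalBasis B ∧
    ∀ U ∈ B, IsCompact U ∧ IsOpen U

/-- The space has no isolated points. -/
def NoIsolatedPoints (X : Type*) [TopologicalSpace X] : Prop :=
  ∀ x : X, ¬ IsOpen ({x} : Set X)

section Aux
variable {X : Type*} [TopologicalSpace X] [MeasurableSpace X] [BorelSpace X]
  [TopologicalSpace.MetrizableSpace X] (μ : Measure X)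

lemma co_diff {U W : Set X} (hU : IsCompactOpen U) (hW : IsCompactOpen W) :
    IsCompactOpen (U \ W) :=
  ⟨hU.1.diff hW.2, hU.2.sdiff hW.1.isClosed⟩

lemma meas_diff_add {U W : Set X} (hU : IsCompactOpen U) (hW : IsCompactOpen W)
    (hsub : W ⊆ U) : μ (U \ W) + μ W = μ U := by
  have h := measure_diff_add_inter (μ := μ) (s := U) hW.1.isClosed.measurableSet
  rwa [Set.inter_eq_self_of_subset_right hsub] at h

/-- Key lemma: a single compact-open value below the total of a finite family of
compact opens can be realized as a sum of values of compact open subsets. -/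
lemma keyA (hg : Good μ) :
    ∀ (m : ℕ) (V : Fin m → Set X), (∀ j, IsCompactOpen (V j)) →
    ∀ U : Set X, IsCompactOpen U → μ U < ∑ j, μ (V j) →
    ∃ W : Fin m → Set X, (∀ j, W j ⊆ V j) ∧ (∀ j, IsCompactOpen (W j)) ∧
      ∑ j, μ (W j) = μ U := by
  intro m
  induction m with
  | zero =>
    intro V _ U _ hlt
    simp at hlt
  | succ m ih =>
    intro V hV U hU hlt
    rw [Fin.sum_univ_succ] at hlt
    rcases lt_trichotomy (μ U) (μ (V 0)) with h | h | h
    · obtain ⟨W0, hW0sub, hW0co, hW0eq⟩ := hg (V 0) (hV 0) U hU h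
      refine ⟨Fin.cons W0 (fun _ => ∅), ?_, ?_, ?_⟩
      · intro j
        refine Fin.cases ?_ ?_ j <;> simp [hW0sub]
      · intro j
        refine Fin.cases ?_ ?_ j <;> simp [hW0co]
        exact fun _ => ⟨isCompact_empty, isOpen_empty⟩
      · rw [Fin.sum_univ_succ]; simp [hW0eq]
    · refine ⟨Fin.cons (V 0) (fun _ => ∅), ?_, ?_, ?_⟩
      · intro j; refine Fin.cases ?_ ?_ j <;> simp
      · intro j
        refine Fin.cases ?_ ?_ j <;> simp [hV 0]
        exact fun _ => ⟨isCompact_empty, isOpen_empty⟩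
      · rw [Fin.sum_univ_succ]; simp [h]
    · -- μ (V 0) < μ U : carve out a piece of U of measure μ (V 0)
      obtain ⟨W, hWsub, hWco, hWeq⟩ := hg U hU (V 0) (hV 0) h
      have hUfin : μ U ≠ ⊤ := hlt.ne_top
      have hWfin : μ W ≠ ⊤ := by rw [hWeq]; exact (h.trans hlt).ne_top
      -- U' = U \ W
      have hU'co : IsCompactOpen (U \ W) := co_diff hU hWco
      have hU'eq : μ (U \ W) + μ (V 0) = μ U := by rw [← hWeq]; exact meas_diff_add μ hU hWco hWsub
      have hlt' : μ (U \ W) < ∑ j : Fin m, μ (V j.succ) := by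
        have hV0fin : μ (V 0) ≠ ⊤ := by rw [← hWeq]; exact hWfin
        by_contra hc
        push_neg at hc
        have hle : μ (V 0) + ∑ j : Fin m, μ (V j.succ) ≤ μ (V 0) + μ (U \ W) :=
          add_le_add_right hc _
        rw [add_comm (μ (V 0)) (μ (U \ W)), hU'eq] at hle
        exact absurd (lt_of_lt_of_le hlt hle) (lt_irrefl _)
      obtain ⟨W', hW'sub, hW'co, hW'eq⟩ := ih (fun j : Fin m => V j.succ) (fun j => hV j.succ) (U \ W) hU'co hlt'
      refine ⟨Fin.cons (V 0) W', ?_, ?_, ?_⟩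
      · intro j; refine Fin.cases ?_ ?_ j <;> simp [hW'sub]
      · intro j; refine Fin.cases ?_ ?_ j <;> simp [hV 0, hW'co]
      · rw [Fin.sum_univ_succ]
        simp only [Fin.cons_zero, Fin.cons_succ]
        rw [add_comm, hW'eq, hU'eq]

lemma keyB (hg : Good μ) :
    ∀ (k : ℕ) (U : Fin k → Set X), (∀ i, IsCompactOpen (U i)) →
    ∀ (m : ℕ) (V : Fin m → Set X), (∀ j, IsCompactOpen (V j)) →
    ∑ i, μ (U i) < ∑ j, μ (V j) →
    ∃ W : Fin m → Set X, (∀ j, W j ⊆ V j) ∧ (∀ j, IsCompactOpen (W j)) ∧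
      ∑ j, μ (W j) = ∑ i, μ (U i) := by
  intro k
  induction k with
  | zero =>
    intro U _ m V _ _
    exact ⟨fun _ => ∅, fun j => Set.empty_subset _,
      fun j => ⟨isCompact_empty, isOpen_empty⟩, by simp⟩
  | succ k ih =>
    intro U hU m V hV hlt
    rw [Fin.sum_univ_succ] at hlt
    have htotfin : μ (U 0) + ∑ i : Fin k, μ (U i.succ) ≠ ⊤ := hlt.ne_top
    have hU0fin : μ (U 0) ≠ ⊤ := fun h => htotfin (by rw [h, top_add])
    have hrestfin : ∑ i : Fin k, μ (U i.succ) ≠ ⊤ := fun h => htotfin (by rw [h, add_top])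
    -- place U 0 into the V's
    have h0lt : μ (U 0) < ∑ j, μ (V j) := (le_add_right le_rfl).trans_lt hlt
    obtain ⟨W, hWsub, hWco, hWeq⟩ := keyA μ hg m V hV (U 0) (hU 0) h0lt
    -- remaining capacity
    have hV'co : ∀ j, IsCompactOpen (V j \ W j) := fun j => co_diff (hV j) (hWco j)
    have hsplit : ∀ j, μ (V j \ W j) + μ (W j) = μ (V j) :=
      fun j => meas_diff_add μ (hV j) (hWco j) (hWsub j)
    have hWjfin : ∀ j, μ (W j) ≠ ⊤ := by
      intro j hj
      apply hU0fin
      rw [← hWeq]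
      exact eq_top_iff.2 (hj ▸ Finset.single_le_sum (f := fun j => μ (W j))
        (fun _ _ => zero_le) (Finset.mem_univ j))
    have hsum' : ∑ j, μ (V j \ W j) + μ (U 0) = ∑ j, μ (V j) := by
      rw [← hWeq, ← Finset.sum_add_distrib]
      exact Finset.sum_congr rfl fun j _ => hsplit j
    have hlt' : ∑ i : Fin k, μ (U i.succ) < ∑ j, μ (V j \ W j) := by
      by_contra hc
      push_neg at hc
      have : ∑ j, μ (V j) ≤ μ (U 0) + ∑ i : Fin k, μ (U i.succ) := by
        rw [← hsum', add_comm (∑ j, μ (V j \ W j))]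
        exact add_le_add_right hc _
      exact absurd (hlt.trans_le this) (lt_irrefl _)
    obtain ⟨W', hW'sub, hW'co, hW'eq⟩ :=
      ih (fun i => U i.succ) (fun i => hU i.succ) m (fun j => V j \ W j) hV'co hlt'
    refine ⟨fun j => W j ∪ W' j, ?_, ?_, ?_⟩
    · exact fun j => Set.union_subset (hWsub j) ((hW'sub j).trans Set.diff_subset)
    · exact fun j => ⟨(hWco j).1.union (hW'co j).1, (hWco j).2.union (hW'co j).2⟩
    · have hdisj : ∀ j, μ (W j ∪ W' j) = μ (W j) + μ (W' j) := by
        intro j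
        exact measure_union (Set.disjoint_of_subset_right (hW'sub j)
          Set.disjoint_sdiff_right) (hW'co j).2.measurableSet
      rw [Fin.sum_univ_succ]
      calc ∑ j, μ (W j ∪ W' j) = ∑ j, (μ (W j) + μ (W' j)) :=
            Finset.sum_congr rfl fun j _ => hdisj j
        _ = ∑ j, μ (W j) + ∑ j, μ (W' j) := Finset.sum_add_distrib
        _ = μ (U 0) + ∑ i : Fin k, μ (U i.succ) := by rw [hWeq, hW'eq]
end Aux

section Prod
variable {X : Type*} [TopologicalSpace X] [MeasurableSpace X] [BorelSpace X]
  [TopologicalSpace.MetrizableSpace X] (μ : Measure X) (n : ℕ)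

/-- Slice of a subset of `X × Fin n`. -/
def Sl (s : Set (X × Fin n)) (i : Fin n) : Set X := {x | (x, i) ∈ s}

lemma sl_co {s : Set (X × Fin n)} (hs : IsCompactOpen s) (i : Fin n) :
    IsCompactOpen (Sl n s i) := by
  constructor
  · have h1 : IsCompact (s ∩ (Set.univ ×ˢ ({i} : Set (Fin n)))) :=
      hs.1.inter_right (isClosed_univ.prod isClosed_singleton)
    have h2 : Sl n s i = Prod.fst '' (s ∩ (Set.univ ×ˢ ({i} : Set (Fin n)))) := by
      ext x
      constructor
      · intro hx
        exact ⟨(x, i), ⟨hx, Set.mem_univ _, rfl⟩, rfl⟩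
      · rintro ⟨⟨y, j⟩, ⟨hm, -, hj⟩, rfl⟩
        simp only [Set.mem_singleton_iff] at hj
        subst hj
        exact hm
    rw [h2]
    exact h1.image continuous_fst
  · exact hs.2.preimage (Continuous.prodMk_left i)

lemma sl_decomp (s : Set (X × Fin n)) :
    s = ⋃ i, (Sl n s i) ×ˢ ({i} : Set (Fin n)) := by
  ext ⟨x, j⟩
  simp only [Set.mem_iUnion, Set.mem_prod, Set.mem_singleton_iff]
  constructor
  · intro h; exact ⟨j, h, rfl⟩
  · rintro ⟨i, h, rfl⟩; exact h

lemma prod_meas (A : Fin n → Set X) (hA : ∀ i, MeasurableSet (A i)) :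
    (μ.prod (Measure.count : Measure (Fin n))) (⋃ i, (A i) ×ˢ ({i} : Set (Fin n)))
      = ∑ i, μ (A i) := by
  rw [measure_iUnion]
  · rw [tsum_fintype]
    congr 1
    ext i
    rw [Measure.prod_prod, Measure.count_singleton, mul_one]
  · intro i j hij
    simp only [Function.onFun]
    rw [Set.disjoint_iff]
    rintro ⟨x, k⟩ ⟨⟨-, hk1⟩, ⟨-, hk2⟩⟩
    simp only [Set.mem_singleton_iff] at hk1 hk2
    exact hij (hk1 ▸ hk2 ▸ rfl)
  · exact fun i => (hA i).prod (measurableSet_singleton i)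

end Prod

theorem stmt12 {X : Type*} [TopologicalSpace X] [MeasurableSpace X] [BorelSpace X]
    [MetrizableSpace X] [LocallyCompactSpace X] [TotallyDisconnectedSpace X]
    (hB : HasCompactOpenBasis X) (hni : NoIsolatedPoints X)
    (μ : Measure X) (hfull : IsFull μ) (hna : NonAtomic μ) (hg : Good μ)
    (n : ℕ) (hn : 0 < n) :
    Good (μ.prod (Measure.count : Measure (Fin n))) := by
  intro V hV U hU hlt
  have hmeas : ∀ s : Set (X × Fin n), IsCompactOpen s →
      (μ.prod (Measure.count : Measure (Fin n))) s = ∑ i, μ (Sl n s i) := by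
    intro s hs
    conv_lhs => rw [sl_decomp n s]
    exact prod_meas μ n _ (fun i => (sl_co n hs i).2.measurableSet)
  rw [hmeas U hU, hmeas V hV] at hlt
  obtain ⟨W, hWsub, hWco, hWeq⟩ := keyB μ hg n (fun i => Sl n U i) (fun i => sl_co n hU i)
    n (fun j => Sl n V j) (fun j => sl_co n hV j) hlt
  refine ⟨⋃ j, (W j) ×ˢ ({j} : Set (Fin n)), ?_, ?_, ?_⟩
  · rintro ⟨x, j⟩ hx
    simp only [Set.mem_iUnion, Set.mem_prod, Set.mem_singleton_iff] at hx
    obtain ⟨i, hxi, hji⟩ := hx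
    subst hji
    exact hWsub _ hxi
  · exact ⟨isCompact_iUnion (fun j => (hWco j).1.prod isCompact_singleton),
      isOpen_iUnion (fun j => (hWco j).2.prod (isOpen_discrete _))⟩
  · rw [prod_meas μ n W (fun j => (hWco j).2.measurableSet), hWeq, hmeas U hU]
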